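/- arXiv:2107.05185 — 4 statements merged into one kernel-verified Lean document; each statement's English description precedes it below -/
import Mathlib

section
/- (Forbidden region, abstract version) Let C > 2, ω ≥ C⁴m², and suppose nonnegative reals A, B, D satisfy D ≤ C m^{3/2} B + C m^{1/2} B A, A ≤ √ω, and the negative energy condition (ω/2)A + (1/2)B² - (1/4)D < 0. Then A < C²m³/(2ω). In particular there is no such configuration with C²m³/(2ω) ≤ A ≤ √ω. -/
set_option maxHeartbeats 1600000 in
/-- Forbidden region (abstract version): with `C > 2`, `ω ≥ C⁴m²`, if nonnegative
`A = ‖u‖²_{Σ̇_y}`, `B = ‖∂_z u‖_{L²}`, `D = ‖u‖⁴_{L⁴}` satisfy the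
Gagliardo–Nirenberg bound, the constraint `A ≤ √ω`, and the energy is negative,
then `A < C²m³/(2ω)`. -/
theorem stmt_5 (C m ω A B D : ℝ) (hC : 2 < C) (hm : 0 < m) (hω : C ^ 4 * m ^ 2 ≤ ω)
    (hA : 0 ≤ A) (hB : 0 ≤ B) (hD : 0 ≤ D)
    (hGN : D ≤ C * m ^ ((3:ℝ)/2) * B + C * m ^ ((1:ℝ)/2) * B * A)
    (hconstr : A ≤ Real.sqrt ω)
    (hE : ω / 2 * A + 1 / 2 * B ^ 2 - 1 / 4 * D < 0) :
    A < C ^ 2 * m ^ 3 / (2 * ω) := by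
  have hω0 : (0:ℝ) < ω := lt_of_lt_of_le (by positivity) hω
  set s := Real.sqrt m with hs_def
  have hs0 : 0 < s := Real.sqrt_pos.mpr hm
  have hs2 : s ^ 2 = m := Real.sq_sqrt hm.le
  set q := Real.sqrt ω with hq_def
  have hq0 : 0 < q := Real.sqrt_pos.mpr hω0
  have hq2 : q ^ 2 = ω := Real.sq_sqrt hω0.le
  have hqge : C ^ 2 * m ≤ q := by
    have : C ^ 4 * m ^ 2 = (C ^ 2 * m) ^ 2 := by ring
    have h := Real.sqrt_le_sqrt hω
    rwa [this, Real.sqrt_sq (by positivity)] at h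
  -- rewrite rpow
  have h12 : m ^ ((1:ℝ)/2) = s := by
    rw [hs_def, Real.sqrt_eq_rpow]
  have h32 : m ^ ((3:ℝ)/2) = m * s := by
    have : ((3:ℝ)/2) = 1 + (1:ℝ)/2 := by norm_num
    rw [this, Real.rpow_add hm, Real.rpow_one, h12]
  rw [h12, h32] at hGN
  clear_value s q
  -- key inequality: ω A / 2 + B²/2 < (C/4) s B (m + A)
  have hkey : ω / 2 * A + 1 / 2 * B ^ 2 < C / 4 * s * B * (m + A) := by
    nlinarith [hE, hGN]
  -- AM-GM: 16 ω A < C² m (m + A)²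
  have hmain : 16 * ω * A < C ^ 2 * m * (m + A) ^ 2 := by
    nlinarith [sq_nonneg (B - C / 4 * s * (m + A)), hs2, hkey]
  have hCm : (0:ℝ) < C ^ 2 * m := by positivity
  rcases le_or_gt A m with hAm | hAm
  · rw [lt_div_iff₀ (by positivity : (0:ℝ) < 2 * ω)]
    nlinarith [hmain, mul_nonneg (sub_nonneg.mpr hAm) (by linarith : (0:ℝ) ≤ 3 * m + A),
      hCm, mul_pos hCm (pow_pos hm 2)]
  · exfalso
    have h4A2 : (m + A) ^ 2 < 4 * A ^ 2 := by nlinarith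
    have h1 : 16 * ω * A < C ^ 2 * m * (4 * A ^ 2) :=
      hmain.trans (mul_lt_mul_of_pos_left h4A2 hCm)
    have h2 : (4 * ω) * (4 * A) < (C ^ 2 * m * A) * (4 * A) := by nlinarith [h1]
    have hA4 : 4 * ω < C ^ 2 * m * A :=
      lt_of_mul_lt_mul_right h2 (by linarith : (0:ℝ) ≤ 4 * A)
    have hAq : q < A := by nlinarith [mul_le_mul_of_nonneg_left hqge hq0.le, hq2, hconstr]
    linarith [hconstr, hAq]
end

section
/- (A priori bound from negative energy) Let C > 2, m > 0, ω ≥ C⁴m², and suppose nonnegative reals A, B, D satisfy D ≤ C m^{3/2} B + C m^{1/2} B A, A ≤ √ω, and (ω/2)A + (1/2)B² - (1/4)D < 0. Then B² ≤ C²m³/2 + C⁶m⁷/(8ω²). -/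
/-- A priori bound from negative energy: with `C > 2`, `ω ≥ C⁴m²`, if nonnegative
`A, B, D` satisfy the Gagliardo–Nirenberg bound, the constraint `A ≤ √ω`, and
the energy is negative, then `B² ≤ C²m³/2 + C⁶m⁷/(8ω²)`. -/
theorem stmt_6 (C m ω A B D : ℝ) (hC : 2 < C) (hm : 0 < m) (hω : C ^ 4 * m ^ 2 ≤ ω)
    (hA : 0 ≤ A) (hB : 0 ≤ B) (hD : 0 ≤ D)
    (hGN : D ≤ C * m ^ ((3:ℝ)/2) * B + C * m ^ ((1:ℝ)/2) * B * A)
    (hconstr : A ≤ Real.sqrt ω)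
    (hE : ω / 2 * A + 1 / 2 * B ^ 2 - 1 / 4 * D < 0) :
    B ^ 2 ≤ C ^ 2 * m ^ 3 / 2 + C ^ 6 * m ^ 7 / (8 * ω ^ 2) := by
  have hC0 : (0:ℝ) < C := by linarith
  have hω0 : (0:ℝ) < ω := lt_of_lt_of_le (by positivity) hω
  set t := m ^ ((1:ℝ)/2) with ht
  have ht0 : 0 < t := Real.rpow_pos_of_pos hm _
  have ht2 : t ^ 2 = m := by
    rw [ht, ← Real.rpow_natCast (m ^ ((1:ℝ)/2)) 2, ← Real.rpow_mul hm.le]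
    norm_num
  have hm32 : m ^ ((3:ℝ)/2) = m * t := by
    rw [show (3:ℝ)/2 = 1 + 1/2 by norm_num, Real.rpow_add hm, Real.rpow_one, ht]
  rw [hm32] at hGN
  clear_value t
  clear ht hm32
  set w := Real.sqrt ω with hwdef
  have hw0 : 0 < w := Real.sqrt_pos.mpr hω0
  have hw2 : w ^ 2 = ω := Real.sq_sqrt hω0.le
  have hwge : C ^ 2 * m ≤ w := by
    have h1 : Real.sqrt (C ^ 4 * m ^ 2) ≤ w := Real.sqrt_le_sqrt hω
    have h2 : Real.sqrt (C ^ 4 * m ^ 2) = C ^ 2 * m := by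
      rw [show C ^ 4 * m ^ 2 = (C ^ 2 * m) ^ 2 by ring]
      exact Real.sqrt_sq (by positivity)
    linarith [h2 ▸ h1]
  clear_value w
  clear hwdef
  have key : B ^ 2 ≤ C ^ 2 * m ^ 3 / 4 := by
    by_cases h : C * t * B ≤ 2 * ω
    · -- then C*t*B*A ≤ 2*ω*A, so 2B² < C*m*t*B
      have h1 : C * t * B * A ≤ 2 * ω * A := mul_le_mul_of_nonneg_right h hA
      have h2 : 2 * B ^ 2 < C * (m * t) * B := by nlinarith
      nlinarith [sq_nonneg (2 * B - C * (m * t)), mul_pos hm ht0]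
    · push_neg at h
      exfalso
      have hB0 : 0 < B := by
        rcases hB.lt_or_eq with hb | hb
        · exact hb
        · exfalso; rw [← hb] at h; nlinarith
      have h1 : C * t * B * A ≤ C * t * B * w :=
        mul_le_mul_of_nonneg_left hconstr (by positivity)
      have h2 : 2 * B ^ 2 < C * (m * t) * B + C * t * B * w := by nlinarith
      have h3 : 2 * B < C * m * t + C * t * w := by nlinarith [mul_pos hB0 hB0]
      have e := mul_lt_mul_of_pos_left h3 (mul_pos hC0 ht0)
      have e2 : C * t * (C * m * t + C * t * w) = C ^ 2 * m ^ 2 + C ^ 2 * m * w := by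
        calc C * t * (C * m * t + C * t * w) = C ^ 2 * m * t ^ 2 + C ^ 2 * t ^ 2 * w := by
              ring
          _ = C ^ 2 * m ^ 2 + C ^ 2 * m * w := by rw [ht2]; ring
      have h4 : 4 * ω < C ^ 2 * m ^ 2 + C ^ 2 * m * w := by
        rw [e2] at e; nlinarith
      have h5 : C ^ 2 * m ^ 2 ≤ w * m := by
        linarith [mul_le_mul_of_nonneg_right hwge hm.le]
      have h6 : C ^ 2 * m * w ≤ w ^ 2 := by
        linarith [mul_le_mul_of_nonneg_right hwge hw0.le]
      have h7 : 3 * w ^ 2 < w * m := by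
        have : ω = w ^ 2 := hw2.symm
        linarith
      linarith [mul_pos (mul_pos (sub_pos.mpr hC) (by linarith : (0:ℝ) < C + 2))
        (mul_pos hm hw0), mul_pos hm hw0]
  have hpos : 0 ≤ C ^ 6 * m ^ 7 / (8 * ω ^ 2) := by positivity
  have hcm : 0 ≤ C ^ 2 * m ^ 3 := by positivity
  linarith
end

section
/- For every function u ∈ H¹(ℝ³) written in coordinates x = (y,z) ∈ ℝ² × ℝ, one has ‖u‖⁴_{L⁴(ℝ³)} ≲ ‖u‖_{L²(ℝ³)} ‖∇_y u‖²_{L²(ℝ³)} ‖∂_z u‖_{L²(ℝ³)}, i.e., there is a universal constant C > 0 such that ∫_{ℝ³}|u|⁴ dx ≤ C ‖u‖_{L²} ‖∇_y u‖²_{L²} ‖∂_z u‖_{L²}. -/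
open MeasureTheory ENNReal

section Helpers

lemma rpow_half_mul_self (a : ℝ≥0∞) : a ^ ((1:ℝ)/2) * a ^ ((1:ℝ)/2) = a := by
  rw [← ENNReal.rpow_add_of_nonneg _ _ (by norm_num) (by norm_num)]; norm_num

lemma rpow_half_mul_le {a b c : ℝ≥0∞} (ha : a ≤ c) (hb : b ≤ c) :
    a ^ ((1:ℝ)/2) * b ^ ((1:ℝ)/2) ≤ c := by
  calc a ^ ((1:ℝ)/2) * b ^ ((1:ℝ)/2)
      ≤ c ^ ((1:ℝ)/2) * c ^ ((1:ℝ)/2) :=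
        mul_le_mul' (ENNReal.rpow_le_rpow ha (by norm_num))
          (ENNReal.rpow_le_rpow hb (by norm_num))
    _ = c := rpow_half_mul_self c

lemma cs_lintegral {α : Type*} [MeasurableSpace α] (μ : Measure α) (f g : α → ℝ≥0∞)
    (hf : AEMeasurable f μ) (hg : AEMeasurable g μ) :
    ∫⁻ x, f x * g x ∂μ ≤ (∫⁻ x, f x ^ 2 ∂μ) ^ ((1:ℝ)/2) * (∫⁻ x, g x ^ 2 ∂μ) ^ ((1:ℝ)/2) := by
  have := ENNReal.lintegral_mul_le_Lp_mul_Lq μ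
    (Real.holderConjugate_iff_eq_conjExponent (by norm_num) |>.2 (by norm_num) :
      Real.HolderConjugate 2 2) hf hg
  simpa [ENNReal.rpow_two] using this

end Helpers

lemma inf_trick {g : ℝ → ℝ≥0∞} (hg : ∫⁻ z, g z ≠ ∞) {c K : ℝ≥0∞}
    (h : ∀ s, c ≤ g s + K) : c ≤ K := by
  refine ENNReal.le_of_forall_pos_le_add fun ε hε _ => ?_
  by_contra hc
  push_neg at hc
  have hge : ∀ s, (ε : ℝ≥0∞) ≤ g s := by
    intro s
    by_contra hs
    push_neg at hs
    exact lt_irrefl c (lt_of_le_of_lt ((h s).trans (add_le_add hs.le le_rfl))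
      (by rwa [add_comm]))
  have h2 : (ε : ℝ≥0∞) * volume (Set.univ : Set ℝ) ≤ ∫⁻ z, g z := by
    rw [← lintegral_const]; exact lintegral_mono hge
  rw [Real.volume_univ, ENNReal.mul_top (by exact_mod_cast hε.ne')] at h2
  exact hg (top_le_iff.1 h2)

lemma ftc_sq_bound {v v' : ℝ → ℂ} (hd : ∀ t, HasDerivAt v (v' t) t) (hc : Continuous v')
    (s t : ℝ) :
    (‖v t‖₊ : ℝ≥0∞) ^ 2 ≤ (‖v s‖₊ : ℝ≥0∞) ^ 2 + 2 * ∫⁻ r, (‖v r‖₊ : ℝ≥0∞) * ‖v' r‖₊ := by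
  set I := ∫⁻ r, (‖v r‖₊ : ℝ≥0∞) * ‖v' r‖₊ with hI
  rcases eq_or_ne I ∞ with h | h
  · rw [h]; simp
  have hvc : Continuous v := continuous_iff_continuousAt.2 fun r => (hd r).continuousAt
  set ψ : ℝ → ℝ := fun r => 2 * (inner ℝ (v r) (v' r) : ℝ) with hψ
  have hψc : Continuous ψ := continuous_const.mul (hvc.inner hc)
  have hψb : ∀ r, |ψ r| ≤ 2 * (‖v r‖ * ‖v' r‖) := by
    intro r
    rw [hψ, abs_mul, abs_two]
    exact mul_le_mul_of_nonneg_left (abs_real_inner_le_norm _ _) (by norm_num)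
  have hftc : ∫ r in s..t, ψ r = ‖v t‖ ^ 2 - ‖v s‖ ^ 2 :=
    intervalIntegral.integral_eq_sub_of_hasDerivAt (fun r _ => (hd r).norm_sq)
      (hψc.intervalIntegrable s t)
  have h1 : ‖v t‖ ^ 2 ≤ ‖v s‖ ^ 2 + ∫ r in Set.uIoc s t, |ψ r| := by
    have h2 := intervalIntegral.norm_integral_le_integral_norm_uIoc (f := ψ) (a := s) (b := t)
      (μ := volume)
    rw [hftc, Real.norm_eq_abs] at h2
    have h3 : ‖v t‖ ^ 2 - ‖v s‖ ^ 2 ≤ ∫ r in Set.uIoc s t, |ψ r| := by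
      refine le_trans (le_abs_self _) (le_trans h2 ?_)
      simp [Real.norm_eq_abs]
    linarith
  have hInt : IntegrableOn ψ (Set.uIoc s t) volume :=
    (intervalIntegrable_iff).1 (hψc.intervalIntegrable s t)
  calc (‖v t‖₊ : ℝ≥0∞) ^ 2 = ENNReal.ofReal (‖v t‖ ^ 2) := by
        rw [ENNReal.ofReal_pow (norm_nonneg _), ofReal_norm, enorm_eq_nnnorm]
    _ ≤ ENNReal.ofReal (‖v s‖ ^ 2 + ∫ r in Set.uIoc s t, |ψ r|) := ENNReal.ofReal_le_ofReal h1
    _ ≤ ENNReal.ofReal (‖v s‖ ^ 2) + ENNReal.ofReal (∫ r in Set.uIoc s t, |ψ r|) :=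
        ENNReal.ofReal_add_le
    _ ≤ (‖v s‖₊ : ℝ≥0∞) ^ 2 + 2 * I := by
        gcongr
        · rw [ENNReal.ofReal_pow (norm_nonneg _), ofReal_norm, enorm_eq_nnnorm]
        · rw [ofReal_integral_eq_lintegral_ofReal hInt.abs
            (Filter.Eventually.of_forall fun r => abs_nonneg _)]
          calc ∫⁻ r in Set.uIoc s t, ENNReal.ofReal |ψ r| ∂volume
              ≤ ∫⁻ r, ENNReal.ofReal |ψ r| := setLIntegral_le_lintegral _ _
            _ ≤ ∫⁻ r, 2 * ((‖v r‖₊ : ℝ≥0∞) * ‖v' r‖₊) := by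
                refine lintegral_mono fun r => ?_
                calc ENNReal.ofReal |ψ r| ≤ ENNReal.ofReal (2 * (‖v r‖ * ‖v' r‖)) :=
                      ENNReal.ofReal_le_ofReal (hψb r)
                  _ = 2 * ((‖v r‖₊ : ℝ≥0∞) * ‖v' r‖₊) := by
                      rw [ENNReal.ofReal_mul (by norm_num), ENNReal.ofReal_mul (norm_nonneg _),
                        ofReal_norm, ofReal_norm, enorm_eq_nnnorm, enorm_eq_nnnorm]
                      norm_num
            _ = 2 * I := lintegral_const_mul' 2 _ (by norm_num)

lemma sq_le_two_lintegral {v v' : ℝ → ℂ} (hd : ∀ t, HasDerivAt v (v' t) t) (hc : Continuous v')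
    (hfin : ∫⁻ r, (‖v r‖₊ : ℝ≥0∞) ^ 2 ≠ ∞) (t : ℝ) :
    (‖v t‖₊ : ℝ≥0∞) ^ 2 ≤ 2 * ∫⁻ r, (‖v r‖₊ : ℝ≥0∞) * ‖v' r‖₊ :=
  inf_trick (g := fun s => (‖v s‖₊ : ℝ≥0∞) ^ 2) hfin fun s => ftc_sq_bound hd hc s t


lemma slice_bound {w w1 w2 : ℝ × ℝ → ℂ} (hwc : Continuous w)
    (hd1 : ∀ b t, HasDerivAt (fun a => w (a, b)) (w1 (t, b)) t)
    (hd2 : ∀ a t, HasDerivAt (fun b => w (a, b)) (w2 (a, t)) t)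
    (hw1 : Continuous w1) (hw2 : Continuous w2)
    (hfin : ∫⁻ y, (‖w y‖₊ : ℝ≥0∞) ^ 2 ≠ ∞) :
    ∫⁻ y, (‖w y‖₊ : ℝ≥0∞) ^ 4
      ≤ 4 * (∫⁻ y, (‖w y‖₊ : ℝ≥0∞) * ‖w1 y‖₊) * (∫⁻ y, (‖w y‖₊ : ℝ≥0∞) * ‖w2 y‖₊) := by
  have mN : Measurable fun y : ℝ × ℝ => (‖w y‖₊ : ℝ≥0∞) :=
    (measurable_nnnorm.comp hwc.measurable).coe_nnreal_ennreal
  have mW1 : Measurable fun y : ℝ × ℝ => (‖w1 y‖₊ : ℝ≥0∞) :=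
    (measurable_nnnorm.comp hw1.measurable).coe_nnreal_ennreal
  have mW2 : Measurable fun y : ℝ × ℝ => (‖w2 y‖₊ : ℝ≥0∞) :=
    (measurable_nnnorm.comp hw2.measurable).coe_nnreal_ennreal
  have hNm : Measurable fun y : ℝ × ℝ => (‖w y‖₊ : ℝ≥0∞) ^ 2 := mN.pow_const 2
  have hND1 : Measurable fun y : ℝ × ℝ => (‖w y‖₊ : ℝ≥0∞) * ‖w1 y‖₊ := mN.mul mW1
  have hND2 : Measurable fun y : ℝ × ℝ => (‖w y‖₊ : ℝ≥0∞) * ‖w2 y‖₊ := mN.mul mW2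
  set F : ℝ → ℝ≥0∞ := fun b => 2 * ∫⁻ a, (‖w (a, b)‖₊ : ℝ≥0∞) * ‖w1 (a, b)‖₊ with hF
  set G : ℝ → ℝ≥0∞ := fun a => 2 * ∫⁻ b, (‖w (a, b)‖₊ : ℝ≥0∞) * ‖w2 (a, b)‖₊ with hG
  have hFm : Measurable F := (hND1.lintegral_prod_left').const_mul 2
  have hGm : Measurable G := (hND2.lintegral_prod_right').const_mul 2
  -- a.e. slice finiteness
  have hfin2 : ∫⁻ b, ∫⁻ a, (‖w (a, b)‖₊ : ℝ≥0∞) ^ 2 ≠ ∞ := by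
    rw [← lintegral_prod_symm _ hNm.aemeasurable, ← Measure.volume_eq_prod]; exact hfin
  have hfin1 : ∫⁻ a, ∫⁻ b, (‖w (a, b)‖₊ : ℝ≥0∞) ^ 2 ≠ ∞ := by
    rw [← lintegral_prod _ hNm.aemeasurable, ← Measure.volume_eq_prod]; exact hfin
  have hae2 : ∀ᵐ b : ℝ, (∫⁻ a, (‖w (a, b)‖₊ : ℝ≥0∞) ^ 2) < ∞ :=
    ae_lt_top hNm.lintegral_prod_left' hfin2
  have hae1 : ∀ᵐ a : ℝ, (∫⁻ b, (‖w (a, b)‖₊ : ℝ≥0∞) ^ 2) < ∞ :=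
    ae_lt_top hNm.lintegral_prod_right' hfin1
  -- lift to the product space
  have lift2 : ∀ᵐ y : ℝ × ℝ, (∫⁻ a, (‖w (a, y.2)‖₊ : ℝ≥0∞) ^ 2) < ∞ := by
    rw [ae_iff] at hae2 ⊢
    refine measure_mono_null
      (t := Set.univ ×ˢ {b : ℝ | ¬ (∫⁻ a, (‖w (a, b)‖₊ : ℝ≥0∞) ^ 2) < ∞})
      (fun y hy => ⟨Set.mem_univ _, hy⟩) ?_
    rw [Measure.volume_eq_prod, Measure.prod_prod, hae2, mul_zero]
  have lift1 : ∀ᵐ y : ℝ × ℝ, (∫⁻ b, (‖w (y.1, b)‖₊ : ℝ≥0∞) ^ 2) < ∞ := by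
    rw [ae_iff] at hae1 ⊢
    refine measure_mono_null
      (t := {a : ℝ | ¬ (∫⁻ b, (‖w (a, b)‖₊ : ℝ≥0∞) ^ 2) < ∞} ×ˢ Set.univ)
      (fun y hy => ⟨hy, Set.mem_univ _⟩) ?_
    rw [Measure.volume_eq_prod, Measure.prod_prod, hae1, zero_mul]
  have hae : ∀ᵐ y : ℝ × ℝ, (‖w y‖₊ : ℝ≥0∞) ^ 4 ≤ G y.1 * F y.2 := by
    filter_upwards [lift1, lift2] with y hy1 hy2
    have b1 : (‖w y‖₊ : ℝ≥0∞) ^ 2 ≤ G y.1 := by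
      have := sq_le_two_lintegral (v := fun b => w (y.1, b)) (v' := fun b => w2 (y.1, b))
        (hd2 y.1) (hw2.comp (continuous_const.prodMk continuous_id)) hy1.ne y.2
      simpa using this
    have b2 : (‖w y‖₊ : ℝ≥0∞) ^ 2 ≤ F y.2 := by
      have := sq_le_two_lintegral (v := fun a => w (a, y.2)) (v' := fun a => w1 (a, y.2))
        (fun t => hd1 y.2 t) (hw1.comp (continuous_id.prodMk continuous_const)) hy2.ne y.1
      simpa using this
    calc (‖w y‖₊ : ℝ≥0∞) ^ 4 = (‖w y‖₊ : ℝ≥0∞) ^ 2 * (‖w y‖₊ : ℝ≥0∞) ^ 2 := by ring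
      _ ≤ G y.1 * F y.2 := mul_le_mul' b1 b2
  calc ∫⁻ y, (‖w y‖₊ : ℝ≥0∞) ^ 4 ≤ ∫⁻ y : ℝ × ℝ, G y.1 * F y.2 := lintegral_mono_ae hae
    _ = (∫⁻ a, G a) * (∫⁻ b, F b) := by
        rw [Measure.volume_eq_prod, lintegral_prod_mul hGm.aemeasurable hFm.aemeasurable]
    _ = (2 * ∫⁻ y, (‖w y‖₊ : ℝ≥0∞) * ‖w2 y‖₊) * (2 * ∫⁻ y, (‖w y‖₊ : ℝ≥0∞) * ‖w1 y‖₊) := by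
        rw [hG, hF, lintegral_const_mul' 2 _ (by norm_num), lintegral_const_mul' 2 _ (by norm_num),
          ← lintegral_prod _ hND2.aemeasurable, ← lintegral_prod_symm _ hND1.aemeasurable,
          ← Measure.volume_eq_prod]
    _ = 4 * (∫⁻ y, (‖w y‖₊ : ℝ≥0∞) * ‖w1 y‖₊) * (∫⁻ y, (‖w y‖₊ : ℝ≥0∞) * ‖w2 y‖₊) := by ring


theorem gn_aniso_aux (u : (ℝ × ℝ) × ℝ → ℂ) (hu : ContDiff ℝ 1 u)
    (hu2 : MemLp u 2 MeasureTheory.volume) :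
    (∫⁻ x : (ℝ × ℝ) × ℝ, (‖u x‖₊ : ℝ≥0∞) ^ 4)
      ≤ ENNReal.ofReal 8
        * (∫⁻ x : (ℝ × ℝ) × ℝ, (‖u x‖₊ : ℝ≥0∞) ^ 2) ^ ((1:ℝ)/2)
        * (∫⁻ x : (ℝ × ℝ) × ℝ,
            ((‖fderiv ℝ u x ((1, 0), 0)‖₊ : ℝ≥0∞) ^ 2
              + (‖fderiv ℝ u x ((0, 1), 0)‖₊ : ℝ≥0∞) ^ 2))
        * (∫⁻ x : (ℝ × ℝ) × ℝ, (‖fderiv ℝ u x ((0, 0), 1)‖₊ : ℝ≥0∞) ^ 2) ^ ((1:ℝ)/2) := by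
  -- measurability / continuity facts
  have hucont : Continuous u := hu.continuous
  have mN : Measurable fun x : (ℝ × ℝ) × ℝ => (‖u x‖₊ : ℝ≥0∞) :=
    (measurable_nnnorm.comp hucont.measurable).coe_nnreal_ennreal
  have hdc : ∀ v : (ℝ × ℝ) × ℝ, Continuous fun x => fderiv ℝ u x v := fun v =>
    (ContinuousLinearMap.apply ℝ ℂ v).continuous.comp (hu.continuous_fderiv one_ne_zero)
  have mD : ∀ v : (ℝ × ℝ) × ℝ, Measurable fun x => (‖fderiv ℝ u x v‖₊ : ℝ≥0∞) := fun v =>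
    (measurable_nnnorm.comp (hdc v).measurable).coe_nnreal_ennreal
  set A := ∫⁻ x : (ℝ × ℝ) × ℝ, (‖u x‖₊ : ℝ≥0∞) ^ 2 with hA_def
  set B := ∫⁻ x : (ℝ × ℝ) × ℝ,
      ((‖fderiv ℝ u x ((1, 0), 0)‖₊ : ℝ≥0∞) ^ 2
        + (‖fderiv ℝ u x ((0, 1), 0)‖₊ : ℝ≥0∞) ^ 2) with hB_def
  set Dz := ∫⁻ x : (ℝ × ℝ) × ℝ, (‖fderiv ℝ u x ((0, 0), 1)‖₊ : ℝ≥0∞) ^ 2 with hDz_def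
  have hA : A ≠ ∞ := by
    have h := lintegral_rpow_enorm_lt_top_of_eLpNorm_lt_top (f := u) (p := 2)
      (by norm_num) (by norm_num) hu2.2
    rw [ENNReal.toReal_ofNat] at h
    simp_rw [ENNReal.rpow_two] at h
    exact h.ne
  -- line derivatives
  have hline1 : ∀ (b z t : ℝ), HasDerivAt (fun a => u ((a, b), z))
      (fderiv ℝ u ((t, b), z) ((1, 0), 0)) t := fun b z t =>
    (hu.differentiable one_ne_zero _).hasFDerivAt.comp_hasDerivAt t
      (((hasDerivAt_id t).prodMk (hasDerivAt_const t b)).prodMk (hasDerivAt_const t z))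
  have hline2 : ∀ (a z t : ℝ), HasDerivAt (fun b => u ((a, b), z))
      (fderiv ℝ u ((a, t), z) ((0, 1), 0)) t := fun a z t =>
    (hu.differentiable one_ne_zero _).hasFDerivAt.comp_hasDerivAt t
      (((hasDerivAt_const t a).prodMk (hasDerivAt_id t)).prodMk (hasDerivAt_const t z))
  have hline3 : ∀ (y : ℝ × ℝ) (t : ℝ), HasDerivAt (fun r => u (y, r))
      (fderiv ℝ u (y, t) ((0, 0), 1)) t := fun y t =>
    (hu.differentiable one_ne_zero _).hasFDerivAt.comp_hasDerivAt t
      ((hasDerivAt_const t y).prodMk (hasDerivAt_id t))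
  rcases eq_or_ne A 0 with hA0 | hA0
  · -- u vanishes a.e.
    have h0 : ∀ᵐ x : (ℝ × ℝ) × ℝ, (‖u x‖₊ : ℝ≥0∞) ^ 2 = 0 :=
      (lintegral_eq_zero_iff (mN.pow_const 2)).1 hA0
    have h4 : (∫⁻ x : (ℝ × ℝ) × ℝ, (‖u x‖₊ : ℝ≥0∞) ^ 4) = 0 := by
      rw [lintegral_eq_zero_iff (mN.pow_const 4)]
      filter_upwards [h0] with x hx
      rw [pow_eq_zero_iff (by norm_num : (2:ℕ) ≠ 0)] at hx
      simp [hx]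
    rw [h4]; exact zero_le
  rcases eq_or_ne Dz ∞ with hDzT | hDzT
  · rcases eq_or_ne B 0 with hB0 | hB0
    · -- gradient in y vanishes: u is constant in y, then u ≡ 0 (else A = ∞)
      have hae : ∀ᵐ x : (ℝ × ℝ) × ℝ,
          ((‖fderiv ℝ u x ((1, 0), 0)‖₊ : ℝ≥0∞) ^ 2
            + (‖fderiv ℝ u x ((0, 1), 0)‖₊ : ℝ≥0∞) ^ 2) = 0 :=
        (lintegral_eq_zero_iff (((mD _).pow_const 2).add ((mD _).pow_const 2))).1 hB0
      have h1 : (fun x => fderiv ℝ u x ((1, 0), 0)) = fun _ => (0 : ℂ) := by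
        rw [← Continuous.ae_eq_iff_eq volume (hdc _) continuous_const]
        filter_upwards [hae] with x hx
        have := (add_eq_zero.1 hx).1
        simpa [pow_eq_zero_iff] using this
      have h2 : (fun x => fderiv ℝ u x ((0, 1), 0)) = fun _ => (0 : ℂ) := by
        rw [← Continuous.ae_eq_iff_eq volume (hdc _) continuous_const]
        filter_upwards [hae] with x hx
        have := (add_eq_zero.1 hx).2
        simpa [pow_eq_zero_iff] using this
      have hconst : ∀ (a b z : ℝ), u ((a, b), z) = u ((0, 0), z) := by
        intro a b z
        have s1 : u ((a, b), z) = u ((0, b), z) :=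
          is_const_of_deriv_eq_zero (fun t => (hline1 b z t).differentiableAt)
            (fun t => by rw [(hline1 b z t).deriv, congrFun h1 ((t, b), z)]) a 0
        have s2 : u ((0, b), z) = u ((0, 0), z) :=
          is_const_of_deriv_eq_zero (fun t => (hline2 0 z t).differentiableAt)
            (fun t => by rw [(hline2 0 z t).deriv, congrFun h2 ((0, t), z)]) b 0
        rw [s1, s2]
      set w0 : ℝ → ℝ≥0∞ := fun z => (‖u ((0, 0), z)‖₊ : ℝ≥0∞) ^ 2 with hw0_def
      have mw0 : Measurable w0 :=
        ((measurable_nnnorm.comp (hucont.comp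
          (continuous_const.prodMk continuous_id)).measurable).coe_nnreal_ennreal).pow_const 2
      by_cases hz : ∀ z : ℝ, u ((0, 0), z) = 0
      · -- u ≡ 0
        have h4 : (∫⁻ x : (ℝ × ℝ) × ℝ, (‖u x‖₊ : ℝ≥0∞) ^ 4) = 0 := by
          have : ∀ x : (ℝ × ℝ) × ℝ, u x = 0 := fun ⟨⟨a, b⟩, z⟩ => (hconst a b z).trans (hz z)
          simp [this]
        rw [h4]; exact zero_le
      · -- otherwise A = ∞, contradiction
        exfalso
        push_neg at hz
        obtain ⟨z₀, hz₀⟩ := hz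
        apply hA
        have hAe : A = ∫⁻ z : ℝ, ∫⁻ _ : ℝ × ℝ, w0 z := by
          rw [hA_def, Measure.volume_eq_prod (ℝ × ℝ) ℝ, lintegral_prod_symm _ (mN.pow_const 2).aemeasurable]
          congr 1; ext z; congr 1; ext y
          rw [hw0_def]; obtain ⟨a, b⟩ := y; rw [hconst a b z]
        rw [hAe]
        have hfull : ∀ z : ℝ, (∫⁻ _ : ℝ × ℝ, w0 z) = w0 z * ∞ := by
          intro z
          rw [lintegral_const]
          congr 1
          rw [Measure.volume_eq_prod, ← Set.univ_prod_univ, Measure.prod_prod,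
            Real.volume_univ, ENNReal.top_mul_top]
        simp_rw [hfull]
        -- the set where w0 > 0 is a nonempty open set, it has positive measure
        have hpos : 0 < w0 z₀ := by
          rw [hw0_def]
          simp only [pos_iff_ne_zero, ne_eq, pow_eq_zero_iff]
          simpa using hz₀
        have hopen : IsOpen {z : ℝ | 0 < w0 z} := by
          have : Continuous fun z : ℝ => ‖u ((0, 0), z)‖ :=
            (hucont.comp (continuous_const.prodMk continuous_id)).norm
          have : {z : ℝ | 0 < w0 z} = {z : ℝ | 0 < ‖u ((0, 0), z)‖} := by
            ext z
            simp [hw0_def, pos_iff_ne_zero, pow_eq_zero_iff]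
          rw [this]
          exact isOpen_lt continuous_const ‹Continuous fun z : ℝ => ‖u ((0, 0), z)‖›
        have hμpos : 0 < volume {z : ℝ | 0 < w0 z} :=
          hopen.measure_pos volume ⟨z₀, hpos⟩
        refine top_le_iff.1 ?_
        calc (⊤ : ℝ≥0∞) = ∞ * volume {z : ℝ | 0 < w0 z} := by
              rw [ENNReal.top_mul hμpos.ne']
          _ = ∫⁻ z in {z : ℝ | 0 < w0 z}, ∞ := by rw [setLIntegral_const]
          _ ≤ ∫⁻ z in {z : ℝ | 0 < w0 z}, w0 z * ∞ := by
              refine setLIntegral_mono (mw0.mul_const ∞) fun z hz => ?_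
              rw [ENNReal.mul_top hz.ne']
          _ ≤ ∫⁻ z : ℝ, w0 z * ∞ := setLIntegral_le_lintegral _ _
    · -- B ≠ 0, Dz = ∞ : right side is infinite
      rw [hDzT]
      rw [ENNReal.top_rpow_of_pos (by norm_num)]
      rw [ENNReal.mul_top]
      · exact le_top
      · refine mul_ne_zero (mul_ne_zero ?_ ?_) hB0
        · simp
        · simp [ENNReal.rpow_eq_zero_iff, hA0]
  · -- main case : Dz ≠ ∞
    set K3 := ∫⁻ x : (ℝ × ℝ) × ℝ, (‖u x‖₊ : ℝ≥0∞) * ‖fderiv ℝ u x ((0, 0), 1)‖₊ with hK3_def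
    have hK3cs : K3 ≤ A ^ ((1:ℝ)/2) * Dz ^ ((1:ℝ)/2) :=
      cs_lintegral volume _ _ mN.aemeasurable (mD _).aemeasurable
    have hK3fin : K3 ≠ ∞ :=
      ne_top_of_le_ne_top (ENNReal.mul_ne_top (ENNReal.rpow_ne_top_of_nonneg (by norm_num) hA)
        (ENNReal.rpow_ne_top_of_nonneg (by norm_num) hDzT)) hK3cs
    set g : ℝ → ℝ≥0∞ := fun z => ∫⁻ y : ℝ × ℝ, (‖u (y, z)‖₊ : ℝ≥0∞) ^ 2 with hg_def
    have hgA : ∫⁻ z, g z = A := by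
      rw [hA_def, Measure.volume_eq_prod (ℝ × ℝ) ℝ,
        lintegral_prod_symm _ (mN.pow_const 2).aemeasurable]
    have hND3 : Measurable fun x : (ℝ × ℝ) × ℝ =>
        (‖u x‖₊ : ℝ≥0∞) * ‖fderiv ℝ u x ((0, 0), 1)‖₊ := mN.mul (mD _)
    have hgS : ∀ z, g z ≤ 2 * K3 := by
      intro z
      refine inf_trick (by rw [hgA]; exact hA) fun s => ?_
      have hpt : ∀ y : ℝ × ℝ, (‖u (y, z)‖₊ : ℝ≥0∞) ^ 2
          ≤ (‖u (y, s)‖₊ : ℝ≥0∞) ^ 2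
            + 2 * ∫⁻ r, (‖u (y, r)‖₊ : ℝ≥0∞) * ‖fderiv ℝ u (y, r) ((0, 0), 1)‖₊ := fun y =>
        ftc_sq_bound (hline3 y) ((hdc _).comp (continuous_const.prodMk continuous_id)) s z
      calc g z ≤ ∫⁻ y : ℝ × ℝ, ((‖u (y, s)‖₊ : ℝ≥0∞) ^ 2
            + 2 * ∫⁻ r, (‖u (y, r)‖₊ : ℝ≥0∞) * ‖fderiv ℝ u (y, r) ((0, 0), 1)‖₊) :=
            lintegral_mono hpt
        _ = g s + 2 * K3 := by
            have e2 : (∫⁻ y : ℝ × ℝ, ∫⁻ r,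
                (‖u (y, r)‖₊ : ℝ≥0∞) * ‖fderiv ℝ u (y, r) ((0, 0), 1)‖₊) = K3 := by
              rw [hK3_def, Measure.volume_eq_prod (ℝ × ℝ) ℝ,
                lintegral_prod _ hND3.aemeasurable]
            have mf : Measurable fun y : ℝ × ℝ => (‖u (y, s)‖₊ : ℝ≥0∞) ^ 2 :=
              (mN.comp (measurable_id.prodMk measurable_const)).pow_const 2
            rw [lintegral_add_left mf, lintegral_const_mul' 2 _ (by norm_num), e2]
    have hQm : Measurable fun x : (ℝ × ℝ) × ℝ =>
        (‖fderiv ℝ u x ((1, 0), 0)‖₊ : ℝ≥0∞) ^ 2 + (‖fderiv ℝ u x ((0, 1), 0)‖₊ : ℝ≥0∞) ^ 2 :=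
      ((mD _).pow_const 2).add ((mD _).pow_const 2)
    have hslice : ∀ z : ℝ, (∫⁻ y : ℝ × ℝ, (‖u (y, z)‖₊ : ℝ≥0∞) ^ 4)
        ≤ 4 * (2 * K3) * ∫⁻ y : ℝ × ℝ,
            ((‖fderiv ℝ u (y, z) ((1, 0), 0)‖₊ : ℝ≥0∞) ^ 2
              + (‖fderiv ℝ u (y, z) ((0, 1), 0)‖₊ : ℝ≥0∞) ^ 2) := by
      intro z
      have hfin : ∫⁻ y : ℝ × ℝ, (‖u (y, z)‖₊ : ℝ≥0∞) ^ 2 ≠ ∞ :=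
        ne_top_of_le_ne_top (ENNReal.mul_ne_top (by norm_num) hK3fin) (hgS z)
      have hsb := slice_bound (w := fun y => u (y, z))
        (w1 := fun y => fderiv ℝ u (y, z) ((1, 0), 0))
        (w2 := fun y => fderiv ℝ u (y, z) ((0, 1), 0))
        (hucont.comp (continuous_id.prodMk continuous_const))
        (fun b t => hline1 b z t) (fun a t => hline2 a z t)
        ((hdc _).comp (continuous_id.prodMk continuous_const))
        ((hdc _).comp (continuous_id.prodMk continuous_const)) hfin
      have mNz : Measurable fun y : ℝ × ℝ => (‖u (y, z)‖₊ : ℝ≥0∞) :=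
        mN.comp (measurable_id.prodMk measurable_const)
      have mD1z : Measurable fun y : ℝ × ℝ => (‖fderiv ℝ u (y, z) ((1, 0), 0)‖₊ : ℝ≥0∞) :=
        (mD _).comp (measurable_id.prodMk measurable_const)
      have mD2z : Measurable fun y : ℝ × ℝ => (‖fderiv ℝ u (y, z) ((0, 1), 0)‖₊ : ℝ≥0∞) :=
        (mD _).comp (measurable_id.prodMk measurable_const)
      have hcs1 : (∫⁻ y : ℝ × ℝ, (‖u (y, z)‖₊ : ℝ≥0∞) * ‖fderiv ℝ u (y, z) ((1, 0), 0)‖₊)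
          ≤ (g z) ^ ((1:ℝ)/2)
            * (∫⁻ y : ℝ × ℝ, (‖fderiv ℝ u (y, z) ((1, 0), 0)‖₊ : ℝ≥0∞) ^ 2) ^ ((1:ℝ)/2) :=
        cs_lintegral volume _ _ mNz.aemeasurable mD1z.aemeasurable
      have hcs2 : (∫⁻ y : ℝ × ℝ, (‖u (y, z)‖₊ : ℝ≥0∞) * ‖fderiv ℝ u (y, z) ((0, 1), 0)‖₊)
          ≤ (g z) ^ ((1:ℝ)/2)
            * (∫⁻ y : ℝ × ℝ, (‖fderiv ℝ u (y, z) ((0, 1), 0)‖₊ : ℝ≥0∞) ^ 2) ^ ((1:ℝ)/2) :=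
        cs_lintegral volume _ _ mNz.aemeasurable mD2z.aemeasurable
      have hQsum : (∫⁻ y : ℝ × ℝ,
            ((‖fderiv ℝ u (y, z) ((1, 0), 0)‖₊ : ℝ≥0∞) ^ 2
              + (‖fderiv ℝ u (y, z) ((0, 1), 0)‖₊ : ℝ≥0∞) ^ 2))
          = (∫⁻ y : ℝ × ℝ, (‖fderiv ℝ u (y, z) ((1, 0), 0)‖₊ : ℝ≥0∞) ^ 2)
            + ∫⁻ y : ℝ × ℝ, (‖fderiv ℝ u (y, z) ((0, 1), 0)‖₊ : ℝ≥0∞) ^ 2 :=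
        lintegral_add_left (mD1z.pow_const 2) _
      calc (∫⁻ y : ℝ × ℝ, (‖u (y, z)‖₊ : ℝ≥0∞) ^ 4)
          ≤ 4 * (∫⁻ y : ℝ × ℝ, (‖u (y, z)‖₊ : ℝ≥0∞) * ‖fderiv ℝ u (y, z) ((1, 0), 0)‖₊)
            * (∫⁻ y : ℝ × ℝ, (‖u (y, z)‖₊ : ℝ≥0∞) * ‖fderiv ℝ u (y, z) ((0, 1), 0)‖₊) := hsb
        _ ≤ 4 * ((g z) ^ ((1:ℝ)/2)
              * (∫⁻ y : ℝ × ℝ, (‖fderiv ℝ u (y, z) ((1, 0), 0)‖₊ : ℝ≥0∞) ^ 2) ^ ((1:ℝ)/2))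
            * ((g z) ^ ((1:ℝ)/2)
              * (∫⁻ y : ℝ × ℝ, (‖fderiv ℝ u (y, z) ((0, 1), 0)‖₊ : ℝ≥0∞) ^ 2) ^ ((1:ℝ)/2)) := by
            gcongr
        _ = 4 * ((g z) ^ ((1:ℝ)/2) * (g z) ^ ((1:ℝ)/2))
            * ((∫⁻ y : ℝ × ℝ, (‖fderiv ℝ u (y, z) ((1, 0), 0)‖₊ : ℝ≥0∞) ^ 2) ^ ((1:ℝ)/2)
              * (∫⁻ y : ℝ × ℝ, (‖fderiv ℝ u (y, z) ((0, 1), 0)‖₊ : ℝ≥0∞) ^ 2) ^ ((1:ℝ)/2)) := by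
            ring
        _ = 4 * g z
            * ((∫⁻ y : ℝ × ℝ, (‖fderiv ℝ u (y, z) ((1, 0), 0)‖₊ : ℝ≥0∞) ^ 2) ^ ((1:ℝ)/2)
              * (∫⁻ y : ℝ × ℝ, (‖fderiv ℝ u (y, z) ((0, 1), 0)‖₊ : ℝ≥0∞) ^ 2) ^ ((1:ℝ)/2)) := by
            rw [rpow_half_mul_self]
        _ ≤ 4 * (2 * K3) * ∫⁻ y : ℝ × ℝ,
              ((‖fderiv ℝ u (y, z) ((1, 0), 0)‖₊ : ℝ≥0∞) ^ 2
                + (‖fderiv ℝ u (y, z) ((0, 1), 0)‖₊ : ℝ≥0∞) ^ 2) := by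
            refine mul_le_mul' (mul_le_mul' le_rfl (hgS z)) ?_
            rw [hQsum]
            exact rpow_half_mul_le le_self_add le_add_self
    have hT : (∫⁻ x : (ℝ × ℝ) × ℝ, (‖u x‖₊ : ℝ≥0∞) ^ 4)
        = ∫⁻ z, ∫⁻ y : ℝ × ℝ, (‖u (y, z)‖₊ : ℝ≥0∞) ^ 4 := by
      rw [Measure.volume_eq_prod (ℝ × ℝ) ℝ, lintegral_prod_symm _ (mN.pow_const 4).aemeasurable]
    have hTB : (∫⁻ z, ∫⁻ y : ℝ × ℝ,
          ((‖fderiv ℝ u (y, z) ((1, 0), 0)‖₊ : ℝ≥0∞) ^ 2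
            + (‖fderiv ℝ u (y, z) ((0, 1), 0)‖₊ : ℝ≥0∞) ^ 2)) = B := by
      rw [hB_def, Measure.volume_eq_prod (ℝ × ℝ) ℝ, lintegral_prod_symm _ hQm.aemeasurable]
    calc (∫⁻ x : (ℝ × ℝ) × ℝ, (‖u x‖₊ : ℝ≥0∞) ^ 4)
        = ∫⁻ z, ∫⁻ y : ℝ × ℝ, (‖u (y, z)‖₊ : ℝ≥0∞) ^ 4 := hT
      _ ≤ ∫⁻ z, 4 * (2 * K3) * ∫⁻ y : ℝ × ℝ,
            ((‖fderiv ℝ u (y, z) ((1, 0), 0)‖₊ : ℝ≥0∞) ^ 2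
              + (‖fderiv ℝ u (y, z) ((0, 1), 0)‖₊ : ℝ≥0∞) ^ 2) := lintegral_mono hslice
      _ = 4 * (2 * K3) * ∫⁻ z, ∫⁻ y : ℝ × ℝ,
            ((‖fderiv ℝ u (y, z) ((1, 0), 0)‖₊ : ℝ≥0∞) ^ 2
              + (‖fderiv ℝ u (y, z) ((0, 1), 0)‖₊ : ℝ≥0∞) ^ 2) :=
          lintegral_const_mul' _ _
            (ENNReal.mul_ne_top (by norm_num) (ENNReal.mul_ne_top (by norm_num) hK3fin))
      _ = 8 * K3 * B := by rw [hTB]; ring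
      _ ≤ 8 * (A ^ ((1:ℝ)/2) * Dz ^ ((1:ℝ)/2)) * B := by gcongr
      _ = ENNReal.ofReal 8 * A ^ ((1:ℝ)/2) * B * Dz ^ ((1:ℝ)/2) := by
          rw [show ENNReal.ofReal 8 = (8 : ℝ≥0∞) by norm_num]
          ring


/-- Anisotropic Gagliardo–Nirenberg inequality on `ℝ³ = ℝ²_y × ℝ_z`:
there is a universal constant `C > 0` with
`∫ |u|⁴ ≤ C ‖u‖_{L²} ‖∇_y u‖²_{L²} ‖∂_z u‖_{L²}` for every `u ∈ H¹(ℝ³)`. -/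
theorem stmt_7 :
    ∃ C : ℝ, 0 < C ∧ ∀ u : (ℝ × ℝ) × ℝ → ℂ, ContDiff ℝ 1 u →
      MemLp u 2 MeasureTheory.volume →
      (∫⁻ x : (ℝ × ℝ) × ℝ, (‖u x‖₊ : ℝ≥0∞) ^ 4)
        ≤ ENNReal.ofReal C
          * (∫⁻ x : (ℝ × ℝ) × ℝ, (‖u x‖₊ : ℝ≥0∞) ^ 2) ^ ((1:ℝ)/2)
          * (∫⁻ x : (ℝ × ℝ) × ℝ,
              ((‖fderiv ℝ u x ((1, 0), 0)‖₊ : ℝ≥0∞) ^ 2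
                + (‖fderiv ℝ u x ((0, 1), 0)‖₊ : ℝ≥0∞) ^ 2))
          * (∫⁻ x : (ℝ × ℝ) × ℝ, (‖fderiv ℝ u x ((0, 0), 1)‖₊ : ℝ≥0∞) ^ 2) ^ ((1:ℝ)/2) :=
  ⟨8, by norm_num, fun u hu hu2 => gn_aniso_aux u hu hu2⟩
end

section
/- (Lower bound / coercivity of the energy) Let C > 2, m > 0, ω ≥ C⁴m². Suppose nonnegative reals A, B, D satisfy D ≤ C m^{3/2} B + C m^{1/2} B A and A ≤ √ω. Then (ω/2)A + (1/2)B² - (1/4)D ≥ (ω/4)A + (1/4)B² - C²m³/8. In particular, 𝒥_ω(m) > -∞, and any u in the constraint set with E_ω(u) < 0 satisfies ω‖u‖²_{Σ̇_y} + ‖∂_z u‖²_{L²} ≤ (C²m³)/2. -/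
/-- Lower bound / coercivity of the energy: with `C > 2`, `ω ≥ C⁴m²`, if
nonnegative `A, B, D` satisfy the Gagliardo–Nirenberg bound and `A ≤ √ω`, then
`E_ω = (ω/2)A + (1/2)B² - (1/4)D ≥ (ω/4)A + (1/4)B² - C²m³/8`; in particular,
if `E_ω < 0` then `ωA + B² ≤ C²m³/2`. -/
theorem stmt_9 (C m ω A B D : ℝ) (hC : 2 < C) (hm : 0 < m) (hω : C ^ 4 * m ^ 2 ≤ ω)
    (hA : 0 ≤ A) (hB : 0 ≤ B) (hD : 0 ≤ D)
    (hGN : D ≤ C * m ^ ((3:ℝ)/2) * B + C * m ^ ((1:ℝ)/2) * B * A)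
    (hconstr : A ≤ Real.sqrt ω) :
    ω / 4 * A + 1 / 4 * B ^ 2 - C ^ 2 * m ^ 3 / 8
      ≤ ω / 2 * A + 1 / 2 * B ^ 2 - 1 / 4 * D ∧
    (ω / 2 * A + 1 / 2 * B ^ 2 - 1 / 4 * D < 0 →
      ω * A + B ^ 2 ≤ C ^ 2 * m ^ 3 / 2) := by
  have hC0 : 0 < C := by linarith
  have hω0 : 0 ≤ ω := le_trans (by positivity) hω
  set s := Real.sqrt m with hsdef
  set t := Real.sqrt ω with htdef
  have hs0 : 0 < s := Real.sqrt_pos.mpr hm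
  have hs2 : s ^ 2 = m := Real.sq_sqrt hm.le
  have ht0 : 0 ≤ t := Real.sqrt_nonneg ω
  have ht2 : t ^ 2 = ω := Real.sq_sqrt hω0
  have hm12 : m ^ ((1:ℝ)/2) = s := by
    rw [hsdef, Real.sqrt_eq_rpow]
  have hm32 : m ^ ((3:ℝ)/2) = m * s := by
    rw [show (3:ℝ)/2 = 1 + 1/2 by norm_num, Real.rpow_add hm, Real.rpow_one,
      hsdef, Real.sqrt_eq_rpow]
  rw [hm12, hm32] at hGN
  -- t ≥ C² m
  have hts : C ^ 2 * m ≤ t := by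
    nlinarith [sq_nonneg (t - C^2*m), sq_nonneg (t + C^2*m)]
  -- key bound: D ≤ ω A + B² + C² m³ / 2
  have key : D ≤ ω * A + B ^ 2 + C ^ 2 * m ^ 3 / 2 := by
    have e1 : C ^ 2 * m ^ 2 * s ^ 2 = C ^ 2 * m ^ 3 := by rw [hs2]; ring
    have e2 : C ^ 2 * s ^ 2 * A ^ 2 = C ^ 2 * m * A ^ 2 := by rw [hs2]
    have h1 : C * (m * s) * B ≤ B ^ 2 / 2 + C ^ 2 * m ^ 3 / 2 := by
      nlinarith [sq_nonneg (B - C * m * s), e1]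
    have h2 : C * s * B * A ≤ B ^ 2 / 2 + C ^ 2 * m * A ^ 2 / 2 := by
      nlinarith [sq_nonneg (B - C * s * A), e2]
    have h3 : C ^ 2 * m * A ^ 2 ≤ ω * A := by
      have hA2 : C ^ 2 * m * A ^ 2 ≤ t * A ^ 2 :=
        mul_le_mul_of_nonneg_right hts (sq_nonneg A)
      have h4 : t * A ^ 2 ≤ t ^ 2 * A := by
        nlinarith [mul_nonneg (mul_nonneg ht0 hA) (sub_nonneg.mpr hconstr)]
      calc C ^ 2 * m * A ^ 2 ≤ t * A ^ 2 := hA2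
        _ ≤ t ^ 2 * A := h4
        _ = ω * A := by rw [ht2]
    linarith [mul_nonneg hω0 hA]
  constructor
  · linarith
  · intro hE
    linarith
end
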